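/- Let A be a reduced commutative ring with finitely many minimal prime ideals, all of them real (condition (mp)), and let A ⊆ B be an integral extension which is biregular, i.e. for every real prime ideal p of A there is exactly one prime ideal q of B lying over p and the induced map of localizations A_p → B_q is an isomorphism. Then the extension A ⊆ B is R-subintegral. -/

import Mathlib

/-- An ideal `I` of a commutative ring is *real* if whenever a finite sum of squares
of elements lies in `I`, then each of these elements lies in `I`. -/
def Ideal.IsRealIdeal {A : Type*} [CommRing A] (I : Ideal A) : Prop :=
  ∀ (n : ℕ) (a : Fin n → A), (∑ i, a i ^ 2) ∈ I → ∀ i, a i ∈ I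

/-- An integral extension `φ : A → B` is *R-subintegral* if for every real prime ideal `p`
of `A` there is exactly one prime ideal `q` of `B` lying over `p`, this `q` is a real ideal,
and the induced map of residue fields `κ(p) → κ(q)` is an isomorphism.  (The residue-field
isomorphism is expressed by its surjectivity: every `b : B` is congruent mod `q` to a
fraction `a/s` with `a s : A`, `s ∉ p`; injectivity is automatic for fields.) -/
def RSubintegral {A B : Type*} [CommRing A] [CommRing B] (φ : A →+* B) : Prop :=
  ∀ p : Ideal A, p.IsPrime → p.IsRealIdeal →
    (∃! q : Ideal B, q.IsPrime ∧ q.comap φ = p) ∧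
    ∀ q : Ideal B, q.IsPrime → q.comap φ = p →
      q.IsRealIdeal ∧ ∀ b : B, ∃ a s : A, s ∉ p ∧ φ s * b - φ a ∈ q

/-- If `A` satisfies condition (mp) (reduced with finitely many minimal primes, all real)
and `A ⊆ B` is an integral biregular extension (over each real prime `p` of `A` there is
exactly one prime `q` of `B`, and `A_p → B_q` is an isomorphism), then `A ⊆ B` is
R-subintegral. -/
theorem biregular_rSubintegral {A B : Type*} [CommRing A] [CommRing B]
    (φ : A →+* B) (hinj : Function.Injective φ) (hint : φ.IsIntegral)
    [IsReduced A] (hfin : (minimalPrimes A).Finite)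
    (hmin : ∀ p ∈ minimalPrimes A, p.IsRealIdeal)
    (hbireg : ∀ (p : Ideal A) (hp : p.IsPrime), p.IsRealIdeal →
      (∃! q : Ideal B, q.IsPrime ∧ q.comap φ = p) ∧
      ∀ (q : Ideal B) (hq : q.IsPrime) (hover : q.comap φ = p),
        Function.Bijective (@Localization.localRingHom A _ B _ p hp q hq φ hover.symm)) :
    RSubintegral φ := by
  intro p hp hpreal
  obtain ⟨h1, h2⟩ := hbireg p hp hpreal
  refine ⟨h1, ?_⟩
  intro q hq hover
  -- the key surjectivity statement on residue fields
  have key : ∀ b : B, ∃ a s : A, s ∉ p ∧ φ s * b - φ a ∈ q := by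
    intro b
    have hsurj := (h2 q hq hover).2
    obtain ⟨x, hx⟩ := hsurj (algebraMap B (Localization.AtPrime q) b)
    obtain ⟨⟨a, s⟩, rfl⟩ := IsLocalization.mk'_surjective p.primeCompl x
    rw [Localization.localRingHom_mk'] at hx
    have heq : algebraMap B (Localization.AtPrime q) (φ a)
        = algebraMap B (Localization.AtPrime q) (φ s * b) := by
      have := congrArg (· * algebraMap B (Localization.AtPrime q) (φ s)) hx
      erw [IsLocalization.mk'_spec] at this
      simpa [IsLocalization.mk'_spec', map_mul, mul_comm, mul_left_comm] using this
    obtain ⟨c, hc⟩ := (IsLocalization.eq_iff_exists q.primeCompl _).mp heq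
    refine ⟨a, s, s.2, ?_⟩
    have hzero : (c : B) * (φ s * b - φ a) = 0 := by
      rw [mul_sub, hc]; ring
    have : (c : B) * (φ s * b - φ a) ∈ q := by rw [hzero]; exact q.zero_mem
    rcases hq.mem_or_mem this with h | h
    · exact absurd h c.2
    · exact h
  refine ⟨?_, key⟩
  -- realness of q
  intro n b hb i
  choose a s hs hmem using fun i => key (b i)
  set S : A := ∏ j, s j with hS
  have hSc : S ∈ p.primeCompl := Submonoid.prod_mem _ (fun j _ => hs j)
  set c : Fin n → A := fun i => (∏ j ∈ Finset.univ.erase i, s j) * a i with hc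
  have hci : ∀ i, φ S * b i - φ (c i) ∈ q := by
    intro i
    have : φ S * b i - φ (c i)
        = φ (∏ j ∈ Finset.univ.erase i, s j) * (φ (s i) * b i - φ (a i)) := by
      rw [hS, ← Finset.mul_prod_erase Finset.univ s (Finset.mem_univ i)]
      simp [hc, map_mul]; ring
    rw [this]
    exact Ideal.mul_mem_left _ _ (hmem i)
  have hsum : (∑ j, c j ^ 2) ∈ p := by
    rw [← hover]
    show φ (∑ j, c j ^ 2) ∈ q
    have h1 : φ S ^ 2 * (∑ j, b j ^ 2) ∈ q := Ideal.mul_mem_left _ _ hb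
    have h2 : φ (∑ j, c j ^ 2) - φ S ^ 2 * (∑ j, b j ^ 2) ∈ q := by
      rw [map_sum, Finset.mul_sum, ← Finset.sum_sub_distrib]
      refine Ideal.sum_mem _ (fun j _ => ?_)
      have : φ (c j ^ 2) - φ S ^ 2 * b j ^ 2
          = -((φ S * b j - φ (c j)) * (φ S * b j + φ (c j))) := by
        rw [map_pow]; ring
      rw [this]
      exact q.neg_mem_iff.mpr (Ideal.mul_mem_right _ _ (hci j))
    have := Ideal.add_mem _ h2 h1
    simpa using this
  have hcp : c i ∈ p := hpreal n c hsum i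
  have herase : (∏ j ∈ Finset.univ.erase i, s j) ∈ p.primeCompl :=
    Submonoid.prod_mem _ (fun j _ => hs j)
  have hφS : φ S ∉ q := by
    intro h
    exact hSc (by rw [← hover]; exact h)
  have hφc : φ (c i) ∈ q := by
    have : c i ∈ q.comap φ := hover ▸ hcp
    exact this
  have : φ S * b i ∈ q := by
    have := Ideal.add_mem _ (hci i) hφc
    simpa using this
  rcases hq.mem_or_mem this with h | h
  · exact absurd h hφS
  · exact h
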